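/- Let K be an algebraically closed field of characteristic 0, r, s ∈ K* with f ∈ K[h] not conformal (i.e., there is no g ∈ K[h] with f(h) = s·g(h) − g(r·h)). Then for every k > 0, the polynomial P_k(h) = Σ_{i=0}^{k-1} sⁱ f(r^{-i}h) is nonzero. -/

import Mathlib

open Polynomial

lemma coeff_comp_C_mul_X {K : Type*} [CommRing K] (p : K[X]) (a : K) (n : ℕ) :
    (p.comp (C a * X)).coeff n = p.coeff n * a ^ n := by
  rw [comp_eq_sum_left, Polynomial.sum_def, finset_sum_coeff]
  have : ∀ e ∈ p.support,
      (C (p.coeff e) * (C a * X) ^ e).coeff n = if e = n then p.coeff e * a ^ e else 0 := by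
    intro e _
    rw [mul_pow, ← C_pow, ← mul_assoc, ← C_mul, coeff_C_mul, coeff_X_pow]
    by_cases h : e = n
    · simp [h]
    · simp [h, Ne.symm h]
  rw [Finset.sum_congr rfl this, Finset.sum_ite_eq' p.support n (fun e => p.coeff e * a ^ e)]
  split
  · rfl
  · simp_all [Polynomial.notMem_support_iff.mp ‹_›]

/-- If `f` is not conformal (no `g` with `f(h) = s·g(h) − g(r·h)`), then
`P_k(h) = Σ_{i=0}^{k-1} sⁱ f(r^{-i}h)` is nonzero for every `k > 0`. -/
theorem Pk_ne_zero_of_not_conformal {K : Type*} [Field K] [IsAlgClosed K] [CharZero K]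
    (r s : K) (hr : r ≠ 0) (hs : s ≠ 0) (f : K[X])
    (hnc : ¬ ∃ g : K[X], f = C s * g - g.comp (C r * X)) :
    ∀ k : ℕ, 0 < k → ∑ i ∈ Finset.range k, C (s ^ i) * f.comp (C (r⁻¹ ^ i) * X) ≠ 0 := by
  -- extract a "resonant" coefficient: n with r^n = s and f.coeff n ≠ 0
  have key : ∃ n : ℕ, r ^ n = s ∧ f.coeff n ≠ 0 := by
    by_contra hcon
    push_neg at hcon
    apply hnc
    refine ⟨∑ n ∈ f.support, C (f.coeff n / (s - r ^ n)) * X ^ n, ?_⟩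
    have hg : ∀ m : ℕ,
        (∑ n ∈ f.support, C (f.coeff n / (s - r ^ n)) * X ^ n).coeff m
          = f.coeff m / (s - r ^ m) := by
      intro m
      rw [finset_sum_coeff]
      have : ∀ e ∈ f.support,
          (C (f.coeff e / (s - r ^ e)) * X ^ e).coeff m
            = if e = m then f.coeff e / (s - r ^ e) else 0 := by
        intro e _
        rw [coeff_C_mul, coeff_X_pow]
        by_cases h : e = m
        · simp [h]
        · simp [h, Ne.symm h]
      rw [Finset.sum_congr rfl this,
        Finset.sum_ite_eq' f.support m (fun e => f.coeff e / (s - r ^ e))]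
      split
      · rfl
      · simp [Polynomial.notMem_support_iff.mp ‹_›]
    ext m
    rw [coeff_sub, coeff_C_mul, coeff_comp_C_mul_X, hg]
    by_cases hm : r ^ m = s
    · simp [hcon m hm, hm]
    · have hd : s - r ^ m ≠ 0 := sub_ne_zero.mpr (Ne.symm hm)
      field_simp
      try ring
  obtain ⟨n, hrn, hfn⟩ := key
  intro k hk hP
  have hco := congrArg (fun p : K[X] => p.coeff n) hP
  simp only [finset_sum_coeff, coeff_C_mul, coeff_comp_C_mul_X, coeff_zero] at hco
  have hterm : ∀ i ∈ Finset.range k, s ^ i * (f.coeff n * (r⁻¹ ^ i) ^ n) = f.coeff n := by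
    intro i _
    have : (r⁻¹ ^ i) ^ n = (r ^ n)⁻¹ ^ i := by
      rw [← inv_pow, ← pow_mul, ← pow_mul, Nat.mul_comm]
    rw [this, hrn]
    field_simp
    rw [← mul_pow, mul_one_div_cancel hs, one_pow]
  rw [Finset.sum_congr rfl hterm, Finset.sum_const, Finset.card_range, nsmul_eq_mul] at hco
  have hk0 : (k : K) ≠ 0 := Nat.cast_ne_zero.mpr hk.ne'
  exact hfn ((mul_eq_zero.mp hco).resolve_left hk0)
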